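/- Let μ be a Radon measure on ℝ and consider the integral operator T on L²(ℝ, μ) given by Tf(x) = ∫_ℝ (1 + min(|x|, |y|)) f(y) dμ(y). For n ∈ ℤ set I_n = [2^{n−1}, 2^n] for n > 0, I_0 = [−1, 1], I_n = [−2^{|n|}, −2^{|n|−1}] for n < 0, and α_n = 2^{|n|} μ(I_n). Then the operator norm of T on L²(ℝ, μ) satisfies ‖T‖ ≤ 64 · sup_{n ∈ ℤ} α_n. -/

import Mathlib

open MeasureTheory ENNReal

noncomputable section

/-- The intervals `I_n = [2^{n−1}, 2^n]` for `n > 0`, `I_0 = [−1, 1]`,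
`I_n = [−2^{|n|}, −2^{|n|−1}]` for `n < 0`. -/
def Iint (n : ℤ) : Set ℝ :=
  if 0 < n then Set.Icc ((2 : ℝ) ^ (n - 1)) ((2 : ℝ) ^ n)
  else if n = 0 then Set.Icc (-1) 1
  else Set.Icc (-(2 : ℝ) ^ (-n)) (-(2 : ℝ) ^ (-n - 1))

/-- `α_n = 2^{|n|} μ(I_n)`. -/
def alphaCoef (μ : Measure ℝ) (n : ℤ) : ℝ≥0∞ := 2 ^ n.natAbs * μ (Iint n)

/-! ### Auxiliary: dyadic ring index -/

/-- dyadic ring index: `ridx x = m` iff `2^m ≤ 1+|x| < 2^(m+1)`. -/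
def ridx (x : ℝ) : ℕ := Nat.log 2 ⌊1 + |x|⌋₊

lemma one_le_floor_aux (x : ℝ) : 1 ≤ ⌊1 + |x|⌋₊ :=
  Nat.le_floor (by simp [abs_nonneg])

lemma ridx_le (x : ℝ) : (2:ℝ) ^ ridx x ≤ 1 + |x| := by
  have h1 := one_le_floor_aux x
  calc (2:ℝ) ^ ridx x = ((2 ^ ridx x : ℕ) : ℝ) := by push_cast; ring
    _ ≤ (⌊1 + |x|⌋₊ : ℝ) := by
        exact_mod_cast Nat.pow_log_le_self 2 (by omega)
    _ ≤ 1 + |x| := Nat.floor_le (by positivity)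

lemma lt_ridx (x : ℝ) : 1 + |x| < (2:ℝ) ^ (ridx x + 1) := by
  have h2 : ⌊1 + |x|⌋₊ + 1 ≤ 2 ^ (ridx x + 1) :=
    Nat.succ_le_of_lt (Nat.lt_pow_succ_log_self (by norm_num) _)
  calc 1 + |x| < ⌊1 + |x|⌋₊ + 1 := Nat.lt_floor_add_one _
    _ ≤ (2:ℝ) ^ (ridx x + 1) := by exact_mod_cast h2

lemma measurable_ridx : Measurable ridx :=
  measurable_from_top.comp (Nat.measurable_floor.comp
    (measurable_const.add continuous_abs.measurable))

lemma ridx_mono {x y : ℝ} (h : |x| ≤ |y|) : ridx x ≤ ridx y :=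
  Nat.log_mono_right (Nat.floor_mono (by linarith))

lemma kernel_bound (x y : ℝ) :
    1 + min |x| |y| ≤ (2:ℝ) ^ (min (ridx x) (ridx y) + 1) := by
  rcases le_total |x| |y| with h | h
  · rw [min_eq_left h, min_eq_left (ridx_mono h)]
    exact (lt_ridx x).le
  · rw [min_eq_right h, min_eq_right (ridx_mono h)]
    exact (lt_ridx y).le

lemma cover (m : ℕ) :
    ridx ⁻¹' {m} ⊆ ⋃ k : ℕ, (Iint ((m + k : ℕ) : ℤ) ∪ Iint (-((m + k : ℕ) : ℤ))) := by
  intro x hx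
  simp only [Set.mem_preimage, Set.mem_singleton_iff] at hx
  have hlow : (2:ℝ) ^ m ≤ 1 + |x| := by rw [← hx]; exact ridx_le x
  by_cases hx1 : |x| < 1
  · have hm : m = 0 := by
      by_contra h
      have h1 : (2:ℝ) ^ 1 ≤ (2:ℝ) ^ m := pow_le_pow_right₀ (by norm_num) (by omega)
      simp only [pow_one] at h1
      linarith
    subst hm
    refine Set.mem_iUnion.2 ⟨0, Or.inl ?_⟩
    have h00 : ((0 + 0 : ℕ) : ℤ) = 0 := by norm_num
    rw [h00, Iint, if_neg (lt_irrefl 0), if_pos rfl]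
    have h := abs_le.1 hx1.le
    exact ⟨h.1, h.2⟩
  · push_neg at hx1
    set j := Nat.log 2 ⌊|x|⌋₊ with hj
    have hfl : 1 ≤ ⌊|x|⌋₊ := Nat.le_floor (by exact_mod_cast hx1)
    have hjle : (2:ℝ) ^ j ≤ |x| := by
      calc (2:ℝ) ^ j = ((2 ^ j : ℕ) : ℝ) := by push_cast; ring
        _ ≤ (⌊|x|⌋₊ : ℝ) := by exact_mod_cast Nat.pow_log_le_self 2 (by omega)
        _ ≤ |x| := Nat.floor_le (abs_nonneg x)
    have hjlt : |x| < (2:ℝ) ^ (j + 1) := by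
      have h2 : ⌊|x|⌋₊ + 1 ≤ 2 ^ (j + 1) :=
        Nat.succ_le_of_lt (Nat.lt_pow_succ_log_self (by norm_num) _)
      calc |x| < ⌊|x|⌋₊ + 1 := Nat.lt_floor_add_one _
        _ ≤ (2:ℝ) ^ (j + 1) := by exact_mod_cast h2
    have hmj : m ≤ j + 1 := by
      have h1 : (2:ℝ) ^ m < (2:ℝ) ^ (j + 2) := by
        calc (2:ℝ) ^ m ≤ 1 + |x| := hlow
          _ ≤ 2 * |x| := by linarith
          _ < 2 * 2 ^ (j + 1) := by linarith
          _ = 2 ^ (j + 2) := by ring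
      have := (pow_lt_pow_iff_right₀ (by norm_num : (1:ℝ) < 2)).1 h1
      omega
    refine Set.mem_iUnion.2 ⟨j + 1 - m, ?_⟩
    have hmk : m + (j + 1 - m) = j + 1 := by omega
    rw [hmk]
    rcases le_or_gt 0 x with hx0 | hx0
    · left
      have hxabs : |x| = x := abs_of_nonneg hx0
      have h0 : (0:ℤ) < ((j + 1 : ℕ) : ℤ) := by exact_mod_cast Nat.succ_pos j
      rw [Iint, if_pos h0]
      refine ⟨?_, ?_⟩
      · have e : ((j + 1 : ℕ) : ℤ) - 1 = ((j : ℕ) : ℤ) := by push_cast; ring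
        rw [e, zpow_natCast]
        rw [← hxabs]; exact hjle
      · rw [zpow_natCast]
        rw [← hxabs]; exact hjlt.le
    · right
      have hxabs : |x| = -x := abs_of_neg hx0
      have h1 : ¬ (0:ℤ) < -((j + 1 : ℕ) : ℤ) := by omega
      have h2 : ¬ (-((j + 1 : ℕ) : ℤ) = 0) := by omega
      rw [Iint, if_neg h1, if_neg h2, neg_neg]
      refine ⟨?_, ?_⟩
      · rw [zpow_natCast]
        have : -x < 2 ^ (j+1) := by rw [← hxabs]; exact hjlt
        linarith
      · have e : -(-((j + 1 : ℕ) : ℤ)) - 1 = ((j : ℕ) : ℤ) := by push_cast; ring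
        rw [neg_neg] at e
        rw [e, zpow_natCast]
        have : (2:ℝ) ^ j ≤ -x := by rw [← hxabs]; exact hjle
        linarith

/-! ### Auxiliary: ℝ≥0∞ sequence estimates -/

lemma rpow_half_sq (x : ℝ≥0∞) : (x ^ (1/2 : ℝ)) ^ 2 = x := by
  rw [← ENNReal.rpow_natCast (x ^ (1/2:ℝ)) 2, ← ENNReal.rpow_mul]
  norm_num

lemma sq_rpow_half (x : ℝ≥0∞) : (x ^ 2) ^ (1/2 : ℝ) = x := by
  rw [← ENNReal.rpow_natCast x 2, ← ENNReal.rpow_mul]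
  norm_num

lemma tsum_cs (a b : ℕ → ℝ≥0∞) :
    (∑' i, a i * b i) ^ 2 ≤ (∑' i, a i ^ 2) * (∑' i, b i ^ 2) := by
  have hpq : Real.HolderConjugate 2 2 := Real.HolderConjugate.two_two
  have h := ENNReal.lintegral_mul_le_Lp_mul_Lq (Measure.count : Measure ℕ) hpq
    (f := a) (g := b) measurable_from_top.aemeasurable measurable_from_top.aemeasurable
  simp only [Pi.mul_apply, lintegral_count] at h
  have h2 : ∀ c : ℕ → ℝ≥0∞, (∑' i, c i ^ (2:ℝ)) = ∑' i, c i ^ 2 := by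
    intro c
    congr 1; funext i
    rw [← ENNReal.rpow_natCast (c i) 2]; norm_num
  rw [h2 a, h2 b] at h
  calc (∑' i, a i * b i) ^ 2
      ≤ ((∑' i, a i ^ 2) ^ (1/2:ℝ) * (∑' i, b i ^ 2) ^ (1/2:ℝ)) ^ 2 :=
        pow_le_pow_left' h 2
    _ = (∑' i, a i ^ 2) * (∑' i, b i ^ 2) := by
        rw [mul_pow, rpow_half_sq, rpow_half_sq]

lemma weighted_cs (c u : ℕ → ℝ≥0∞) :
    (∑' i, c i * u i) ^ 2 ≤ (∑' i, c i) * (∑' i, c i * u i ^ 2) := by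
  have key := tsum_cs (fun i => (c i) ^ (1/2:ℝ)) (fun i => (c i) ^ (1/2:ℝ) * u i)
  have e1 : ∀ i, (c i) ^ (1/2:ℝ) * ((c i) ^ (1/2:ℝ) * u i) = c i * u i := by
    intro i; rw [← mul_assoc, ← sq, rpow_half_sq]
  have e2 : ∀ i, ((c i) ^ (1/2:ℝ)) ^ 2 = c i := fun i => rpow_half_sq _
  have e3 : ∀ i, ((c i) ^ (1/2:ℝ) * u i) ^ 2 = c i * u i ^ 2 := by
    intro i; rw [mul_pow, rpow_half_sq]
  simpa only [e1, e2, e3] using key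

lemma geom_half : ∑' k : ℕ, ((2:ℝ≥0∞)⁻¹) ^ k = 2 := by
  rw [ENNReal.tsum_geometric, ENNReal.one_sub_inv_two, inv_inv]

/-- `rdec = 2^{-1/2}`. -/
def rdec : ℝ≥0∞ := (2:ℝ≥0∞) ^ (-(1/2) : ℝ)

lemma rdec_le_one : rdec ≤ 1 := by
  have : rdec ≤ (2:ℝ≥0∞) ^ (0:ℝ) :=
    ENNReal.rpow_le_rpow_of_exponent_le (by norm_num) (by norm_num)
  simpa using this

lemma rdec_sq : rdec ^ 2 = 2⁻¹ := by
  rw [rdec, ← ENNReal.rpow_natCast ((2:ℝ≥0∞) ^ (-(1/2):ℝ)) 2, ← ENNReal.rpow_mul]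
  norm_num [ENNReal.rpow_neg_one]

lemma tsum_rdec : ∑' k : ℕ, rdec ^ k ≤ 4 := by
  have he : Summable fun k : ℕ => rdec ^ (2 * k) := ENNReal.summable
  have ho : Summable fun k : ℕ => rdec ^ (2 * k + 1) := ENNReal.summable
  rw [← tsum_even_add_odd he ho]
  have h1 : ∑' k : ℕ, rdec ^ (2 * k) = 2 := by
    have : ∀ k : ℕ, rdec ^ (2 * k) = ((2:ℝ≥0∞)⁻¹) ^ k := by
      intro k; rw [pow_mul, rdec_sq]
    rw [tsum_congr this, geom_half]
  have h2 : ∑' k : ℕ, rdec ^ (2 * k + 1) ≤ 2 := by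
    have : ∀ k : ℕ, rdec ^ (2 * k + 1) ≤ ((2:ℝ≥0∞)⁻¹) ^ k := by
      intro k
      rw [pow_succ, pow_mul, rdec_sq]
      exact mul_le_of_le_one_right zero_le rdec_le_one
    calc ∑' k : ℕ, rdec ^ (2 * k + 1) ≤ ∑' k : ℕ, ((2:ℝ≥0∞)⁻¹) ^ k :=
          ENNReal.tsum_le_tsum this
      _ = 2 := geom_half
  calc (∑' k : ℕ, rdec ^ (2*k)) + ∑' k : ℕ, rdec ^ (2*k+1) ≤ 2 + 2 := by
        rw [h1]; exact add_le_add le_rfl h2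
    _ = 4 := by norm_num

lemma row_sum (m : ℕ) : ∑' ℓ : ℕ, rdec ^ (Nat.dist m ℓ) ≤ 8 := by
  rw [← Summable.sum_add_tsum_nat_add' (f := fun ℓ : ℕ => rdec ^ (Nat.dist m ℓ)) (k := m)
    ENNReal.summable]
  have h1 : ∑ ℓ ∈ Finset.range m, rdec ^ (Nat.dist m ℓ) ≤ 4 := by
    have hrefl := Finset.sum_range_reflect (fun ℓ => rdec ^ (Nat.dist m ℓ)) m
    have hterm : ∀ j ∈ Finset.range m, rdec ^ (Nat.dist m (m - 1 - j)) ≤ rdec ^ j := by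
      intro j hj
      rw [Finset.mem_range] at hj
      have hd : Nat.dist m (m - 1 - j) = j + 1 := by
        rw [Nat.dist_eq_sub_of_le_right (by omega)]; omega
      rw [hd, pow_succ, mul_comm]
      exact mul_le_of_le_one_left zero_le rdec_le_one
    calc ∑ ℓ ∈ Finset.range m, rdec ^ (Nat.dist m ℓ)
        = ∑ j ∈ Finset.range m, rdec ^ (Nat.dist m (m - 1 - j)) := hrefl.symm
      _ ≤ ∑ j ∈ Finset.range m, rdec ^ j := Finset.sum_le_sum hterm
      _ ≤ ∑' j : ℕ, rdec ^ j := ENNReal.sum_le_tsum _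
      _ ≤ 4 := tsum_rdec
  have h2 : ∑' j : ℕ, rdec ^ (Nat.dist m (j + m)) ≤ 4 := by
    have hdj : ∀ j : ℕ, Nat.dist m (j + m) = j := by
      intro j; rw [Nat.dist_eq_sub_of_le (by omega)]; omega
    calc ∑' j : ℕ, rdec ^ (Nat.dist m (j + m)) = ∑' j : ℕ, rdec ^ j :=
          tsum_congr fun j => by rw [hdj j]
      _ ≤ 4 := tsum_rdec
  calc _ ≤ (4:ℝ≥0∞) + 4 := add_le_add h1 h2
    _ = 8 := by norm_num

lemma inv_pow_rpow (n : ℕ) (s : ℝ) :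
    (((2:ℝ≥0∞)⁻¹) ^ n) ^ s = (2:ℝ≥0∞) ^ (-(n:ℝ) * s) := by
  rw [← ENNReal.rpow_neg_one 2, ← ENNReal.rpow_natCast ((2:ℝ≥0∞) ^ (-1:ℝ)) n,
    ← ENNReal.rpow_mul, ← ENNReal.rpow_mul]
  ring_nf

lemma rdec_pow (n : ℕ) : rdec ^ n = (2:ℝ≥0∞) ^ ((-(1/2)) * (n:ℝ)) := by
  rw [rdec, ← ENNReal.rpow_natCast ((2:ℝ≥0∞) ^ (-(1/2):ℝ)) n, ← ENNReal.rpow_mul]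

lemma coeff_id (m ℓ : ℕ) :
    (((2:ℝ≥0∞)⁻¹) ^ m) ^ (1/2:ℝ) * (2:ℝ≥0∞) ^ (min m ℓ + 1) * (((2:ℝ≥0∞)⁻¹) ^ ℓ) ^ (1/2:ℝ)
      = 2 * rdec ^ (Nat.dist m ℓ) := by
  have h2 : (2:ℝ≥0∞) ≠ 0 := two_ne_zero
  have h2' : (2:ℝ≥0∞) ≠ ⊤ := ENNReal.ofNat_ne_top
  have hexp : -(m:ℝ) * (1/2) + ((min m ℓ + 1 : ℕ) : ℝ) + -(ℓ:ℝ) * (1/2)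
      = 1 + (-(1/2)) * ((Nat.dist m ℓ : ℕ) : ℝ) := by
    rcases le_total m ℓ with h | h
    · rw [Nat.dist_eq_sub_of_le h, min_eq_left h]
      push_cast [h]
      ring
    · rw [Nat.dist_eq_sub_of_le_right h, min_eq_right h]
      push_cast [h]
      ring
  calc (((2:ℝ≥0∞)⁻¹) ^ m) ^ (1/2:ℝ) * (2:ℝ≥0∞) ^ (min m ℓ + 1) * (((2:ℝ≥0∞)⁻¹) ^ ℓ) ^ (1/2:ℝ)
      = (2:ℝ≥0∞) ^ (-(m:ℝ) * (1/2)) * (2:ℝ≥0∞) ^ ((min m ℓ + 1 : ℕ) : ℝ)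
          * (2:ℝ≥0∞) ^ (-(ℓ:ℝ) * (1/2)) := by
        rw [inv_pow_rpow, inv_pow_rpow, ENNReal.rpow_natCast]
    _ = (2:ℝ≥0∞) ^ (-(m:ℝ) * (1/2) + ((min m ℓ + 1 : ℕ) : ℝ) + -(ℓ:ℝ) * (1/2)) := by
        rw [ENNReal.rpow_add _ _ h2 h2', ENNReal.rpow_add _ _ h2 h2']
    _ = (2:ℝ≥0∞) ^ (1 + (-(1/2)) * ((Nat.dist m ℓ : ℕ) : ℝ)) := by rw [hexp]
    _ = 2 * rdec ^ (Nat.dist m ℓ) := by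
        rw [ENNReal.rpow_add _ _ h2 h2', ENNReal.rpow_one, rdec_pow]

/-! ### Main theorem -/

theorem statement19 (μ : Measure ℝ) [IsLocallyFiniteMeasure μ] (f : ℝ → ℝ) :
    (∫⁻ x, (∫⁻ y, ENNReal.ofReal ((1 + min |x| |y|) * |f y|) ∂μ) ^ (2 : ℕ) ∂μ) ^ (1 / 2 : ℝ)
      ≤ 64 * (⨆ n : ℤ, alphaCoef μ n) *
          (∫⁻ x, ENNReal.ofReal (f x ^ 2) ∂μ) ^ (1 / 2 : ℝ) := by
  classical
  set S := ⨆ n : ℤ, alphaCoef μ n with hS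
  set G : ℝ → ℝ≥0∞ := fun y => ENNReal.ofReal |f y| with hG
  set R : ℕ → Set ℝ := fun ℓ => ridx ⁻¹' {ℓ} with hR
  have hRmeas : ∀ ℓ, MeasurableSet (R ℓ) := fun ℓ => measurable_ridx (measurableSet_singleton ℓ)
  have hmemR : ∀ (ℓ : ℕ) (y : ℝ), y ∈ R ℓ ↔ ridx y = ℓ := by
    intro ℓ y
    simp only [hR, Set.mem_preimage, Set.mem_singleton_iff]
  set d : ℕ → ℝ≥0∞ := fun ℓ => ∫⁻ y, (R ℓ).indicator G y ∂μ with hd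
  set q : ℕ → ℝ≥0∞ := fun ℓ => ∫⁻ y, (R ℓ).indicator (fun z => G z ^ 2) y ∂μ with hq
  set u : ℕ → ℝ≥0∞ := fun ℓ => (q ℓ) ^ (1/2:ℝ) with hu
  set ρ : ℕ → ℝ≥0∞ := fun ℓ => μ (R ℓ) with hρ
  set t : ℕ → ℝ≥0∞ := fun m => ∑' ℓ, 2 ^ (min m ℓ + 1) * d ℓ with ht
  set P : ℕ → ℝ≥0∞ := fun m => ∑' ℓ, rdec ^ (Nat.dist m ℓ) * u ℓ with hP
  set N2 := ∫⁻ x, ENNReal.ofReal (f x ^ 2) ∂μ with hN2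

  -- pointwise: ofReal (f x ^ 2) = (G x)^2
  have hGsq : ∀ x, ENNReal.ofReal (f x ^ 2) = G x ^ 2 := by
    intro x
    rw [hG]
    simp only []
    rw [← sq_abs, ENNReal.ofReal_pow (abs_nonneg _)]
  -- (1) each alpha coefficient is at most S
  have h_alpha : ∀ n : ℤ, μ (Iint n) ≤ ((2:ℝ≥0∞)⁻¹) ^ n.natAbs * S := by
    intro n
    have h1 : alphaCoef μ n ≤ S := le_iSup (fun n => alphaCoef μ n) n
    rw [alphaCoef] at h1
    have hcancel : ((2:ℝ≥0∞)⁻¹) ^ n.natAbs * (2:ℝ≥0∞) ^ n.natAbs = 1 := by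
      rw [← mul_pow, ENNReal.inv_mul_cancel two_ne_zero ENNReal.ofNat_ne_top, one_pow]
    calc μ (Iint n) = ((2:ℝ≥0∞)⁻¹) ^ n.natAbs * ((2:ℝ≥0∞) ^ n.natAbs * μ (Iint n)) := by
          rw [← mul_assoc, hcancel, one_mul]
      _ ≤ ((2:ℝ≥0∞)⁻¹) ^ n.natAbs * S := mul_le_mul_right h1 _
  -- (2) measure of each ring
  have h_rho : ∀ m, ρ m ≤ 4 * S * ((2:ℝ≥0∞)⁻¹) ^ m := by
    intro m
    calc ρ m ≤ μ (⋃ k : ℕ, (Iint ((m + k : ℕ) : ℤ) ∪ Iint (-((m + k : ℕ) : ℤ)))) :=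
          measure_mono (cover m)
      _ ≤ ∑' k : ℕ, μ (Iint ((m + k : ℕ) : ℤ) ∪ Iint (-((m + k : ℕ) : ℤ))) :=
          measure_iUnion_le _
      _ ≤ ∑' k : ℕ, (((2:ℝ≥0∞)⁻¹) ^ (m + k) * S + ((2:ℝ≥0∞)⁻¹) ^ (m + k) * S) := by
          refine ENNReal.tsum_le_tsum fun k => ?_
          refine (measure_union_le _ _).trans (add_le_add ?_ ?_)
          · have h := h_alpha ((m + k : ℕ) : ℤ)
            rwa [Int.natAbs_natCast] at h
          · have h := h_alpha (-((m + k : ℕ) : ℤ))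
            rwa [Int.natAbs_neg, Int.natAbs_natCast] at h
      _ = 4 * S * ((2:ℝ≥0∞)⁻¹) ^ m := by
          have hterm : ∀ k : ℕ, ((2:ℝ≥0∞)⁻¹) ^ (m + k) * S + ((2:ℝ≥0∞)⁻¹) ^ (m + k) * S
              = (2 * S * ((2:ℝ≥0∞)⁻¹) ^ m) * ((2:ℝ≥0∞)⁻¹) ^ k := by
            intro k
            rw [pow_add]
            ring
          rw [tsum_congr hterm, ENNReal.tsum_mul_left, geom_half]
          ring
  -- (3) Cauchy–Schwarz on each ring
  have h_d : ∀ ℓ, d ℓ ≤ (ρ ℓ) ^ (1/2:ℝ) * u ℓ := by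
    intro ℓ
    obtain ⟨φ, hφm, hφle, hφeq⟩ := exists_measurable_le_lintegral_eq μ ((R ℓ).indicator G)
    have hφR : ∀ y, ((R ℓ).indicator (1 : ℝ → ℝ≥0∞) * φ) y = φ y := by
      intro y
      by_cases hy : y ∈ R ℓ
      · simp [Set.indicator_of_mem hy]
      · have h0 : φ y = 0 := by
          have := hφle y
          rw [Set.indicator_of_notMem hy] at this
          exact le_antisymm this zero_le
        simp [h0]
    have hpq : Real.HolderConjugate 2 2 := Real.HolderConjugate.two_two
    have hH := ENNReal.lintegral_mul_le_Lp_mul_Lq μ hpq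
      (f := (R ℓ).indicator (1 : ℝ → ℝ≥0∞)) (g := φ)
      ((measurable_one.indicator (hRmeas ℓ)).aemeasurable) hφm.aemeasurable
    have hlhs : ∫⁻ y, ((R ℓ).indicator (1 : ℝ → ℝ≥0∞) * φ) y ∂μ = d ℓ := by
      rw [lintegral_congr hφR, hd]
      exact hφeq.symm
    have hf2 : ∫⁻ y, ((R ℓ).indicator (1 : ℝ → ℝ≥0∞) y) ^ (2:ℝ) ∂μ = ρ ℓ := by
      have hpt : ∀ y, ((R ℓ).indicator (1 : ℝ → ℝ≥0∞) y) ^ (2:ℝ)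
          = (R ℓ).indicator (1 : ℝ → ℝ≥0∞) y := by
        intro y
        by_cases hy : y ∈ R ℓ
        · rw [Set.indicator_of_mem hy]
          simp
        · rw [Set.indicator_of_notMem hy]
          rw [ENNReal.zero_rpow_of_pos (by norm_num)]
      rw [lintegral_congr hpt, lintegral_indicator_one (hRmeas ℓ)]
    have hg2 : ∫⁻ y, (φ y) ^ (2:ℝ) ∂μ ≤ q ℓ := by
      rw [hq]
      refine lintegral_mono fun y => ?_
      rw [ENNReal.rpow_two]
      calc φ y ^ (2:ℕ) ≤ ((R ℓ).indicator G y) ^ (2:ℕ) := pow_le_pow_left' (hφle y) 2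
        _ = (R ℓ).indicator (fun z => G z ^ 2) y := by
            by_cases hy : y ∈ R ℓ
            · rw [Set.indicator_of_mem hy, Set.indicator_of_mem hy]
            · rw [Set.indicator_of_notMem hy, Set.indicator_of_notMem hy]
              simp
    calc d ℓ = ∫⁻ y, ((R ℓ).indicator (1 : ℝ → ℝ≥0∞) * φ) y ∂μ := hlhs.symm
      _ ≤ (∫⁻ y, ((R ℓ).indicator (1 : ℝ → ℝ≥0∞) y) ^ (2:ℝ) ∂μ) ^ (1/2:ℝ)
          * (∫⁻ y, (φ y) ^ (2:ℝ) ∂μ) ^ (1/2:ℝ) := hH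
      _ ≤ (ρ ℓ) ^ (1/2:ℝ) * u ℓ := by
          rw [hf2, hu]
          exact mul_le_mul' le_rfl (ENNReal.rpow_le_rpow hg2 (by norm_num))
  -- (4) the squares add up to at most N2
  have h_q : ∑' ℓ, q ℓ ≤ N2 := by
    have hex : ∀ ℓ : ℕ, ∃ ψ : ℝ → ℝ≥0∞, Measurable ψ ∧ ψ ≤ (R ℓ).indicator (fun z => G z ^ 2) ∧
        ∫⁻ y, (R ℓ).indicator (fun z => G z ^ 2) y ∂μ = ∫⁻ y, ψ y ∂μ :=
      fun ℓ => exists_measurable_le_lintegral_eq μ _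
    choose ψ hψm hψle hψeq using hex
    have hΦle : ∀ y, (∑' ℓ, ψ ℓ y) ≤ G y ^ 2 := by
      intro y
      have hsingle : ∀ ℓ, ℓ ≠ ridx y → ψ ℓ y = 0 := by
        intro ℓ hℓ
        have hy : y ∉ R ℓ := fun hmem => hℓ ((hmemR ℓ y).1 hmem).symm
        have := hψle ℓ y
        rw [Set.indicator_of_notMem hy] at this
        exact le_antisymm this zero_le
      rw [tsum_eq_single (ridx y) hsingle]
      refine (hψle (ridx y) y).trans ?_
      rw [Set.indicator_of_mem ((hmemR (ridx y) y).2 rfl)]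
    calc ∑' ℓ, q ℓ = ∑' ℓ, ∫⁻ y, ψ ℓ y ∂μ := tsum_congr fun ℓ => hψeq ℓ
      _ = ∫⁻ y, ∑' ℓ, ψ ℓ y ∂μ := (lintegral_tsum fun ℓ => (hψm ℓ).aemeasurable).symm
      _ ≤ ∫⁻ y, G y ^ 2 ∂μ := lintegral_mono hΦle
      _ = N2 := by
          rw [hN2]
          exact lintegral_congr fun x => (hGsq x).symm
  -- (5) inner integral bound
  have h_inner : ∀ x, (∫⁻ y, ENNReal.ofReal ((1 + min |x| |y|) * |f y|) ∂μ) ≤ t (ridx x) := by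
    intro x
    have hpt : ∀ y, ENNReal.ofReal ((1 + min |x| |y|) * |f y|)
        ≤ (2:ℝ≥0∞) ^ (min (ridx x) (ridx y) + 1) * G y := by
      intro y
      rw [ENNReal.ofReal_mul (by positivity : (0:ℝ) ≤ 1 + min |x| |y|)]
      refine mul_le_mul' ?_ le_rfl
      calc ENNReal.ofReal (1 + min |x| |y|)
          ≤ ENNReal.ofReal ((2:ℝ) ^ (min (ridx x) (ridx y) + 1)) :=
            ENNReal.ofReal_le_ofReal (kernel_bound x y)
        _ = (2:ℝ≥0∞) ^ (min (ridx x) (ridx y) + 1) := by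
            rw [ENNReal.ofReal_pow (by norm_num : (0:ℝ) ≤ 2)]
            norm_num
    refine (lintegral_mono hpt).trans ?_
    obtain ⟨φ, hφm, hφle, hφeq⟩ := exists_measurable_le_lintegral_eq μ
      (fun y => (2:ℝ≥0∞) ^ (min (ridx x) (ridx y) + 1) * G y)
    rw [hφeq]
    have hpart : ∀ y, φ y = ∑' ℓ, (R ℓ).indicator φ y := by
      intro y
      rw [tsum_eq_single (ridx y)
        (fun ℓ hℓ => Set.indicator_of_notMem (fun hmem => hℓ ((hmemR ℓ y).1 hmem).symm) φ)]
      rw [Set.indicator_of_mem ((hmemR (ridx y) y).2 rfl)]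
    calc ∫⁻ y, φ y ∂μ = ∫⁻ y, ∑' ℓ, (R ℓ).indicator φ y ∂μ := lintegral_congr hpart
      _ = ∑' ℓ, ∫⁻ y, (R ℓ).indicator φ y ∂μ :=
          lintegral_tsum fun ℓ => (hφm.indicator (hRmeas ℓ)).aemeasurable
      _ ≤ ∑' ℓ, (2:ℝ≥0∞) ^ (min (ridx x) ℓ + 1) * d ℓ := by
          refine ENNReal.tsum_le_tsum fun ℓ => ?_
          have hptℓ : ∀ y, (R ℓ).indicator φ y
              ≤ (2:ℝ≥0∞) ^ (min (ridx x) ℓ + 1) * (R ℓ).indicator G y := by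
            intro y
            by_cases hy : y ∈ R ℓ
            · rw [Set.indicator_of_mem hy, Set.indicator_of_mem hy]
              have hyℓ : ridx y = ℓ := (hmemR ℓ y).1 hy
              calc φ y ≤ (2:ℝ≥0∞) ^ (min (ridx x) (ridx y) + 1) * G y := hφle y
                _ = (2:ℝ≥0∞) ^ (min (ridx x) ℓ + 1) * G y := by rw [hyℓ]
            · simp [Set.indicator_of_notMem hy]
          calc ∫⁻ y, (R ℓ).indicator φ y ∂μ
              ≤ ∫⁻ y, (2:ℝ≥0∞) ^ (min (ridx x) ℓ + 1) * (R ℓ).indicator G y ∂μ :=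
                lintegral_mono hptℓ
            _ = (2:ℝ≥0∞) ^ (min (ridx x) ℓ + 1) * d ℓ :=
                lintegral_const_mul' _ _ (ENNReal.pow_ne_top ENNReal.ofNat_ne_top)
      _ = t (ridx x) := by rw [ht]
  -- (6) full double integral bound
  have h_A : (∫⁻ x, (∫⁻ y, ENNReal.ofReal ((1 + min |x| |y|) * |f y|) ∂μ) ^ (2:ℕ) ∂μ)
      ≤ ∑' m, (t m) ^ 2 * ρ m := by
    have step1 : (∫⁻ x, (∫⁻ y, ENNReal.ofReal ((1 + min |x| |y|) * |f y|) ∂μ) ^ (2:ℕ) ∂μ)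
        ≤ ∫⁻ x, (t (ridx x)) ^ 2 ∂μ :=
      lintegral_mono fun x => pow_le_pow_left' (h_inner x) 2
    have step2 : ∫⁻ x, (t (ridx x)) ^ 2 ∂μ = ∑' m, (t m) ^ 2 * ρ m := by
      have hmap : ∫⁻ x, (t (ridx x)) ^ 2 ∂μ = ∫⁻ n, (t n) ^ 2 ∂(μ.map ridx) :=
        (lintegral_map (f := fun n => (t n) ^ 2) measurable_from_top measurable_ridx).symm
      rw [hmap, lintegral_countable']
      refine tsum_congr fun n => ?_
      rw [Measure.map_apply measurable_ridx (measurableSet_singleton n)]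
    exact step1.trans (le_of_eq step2)
  -- (7) weighted bound on t
  have h_t : ∀ m, (((2:ℝ≥0∞)⁻¹) ^ m) ^ (1/2:ℝ) * t m ≤ 4 * S ^ (1/2:ℝ) * P m := by
    intro m
    rw [ht, hP]
    simp only []
    rw [← ENNReal.tsum_mul_left, ← ENNReal.tsum_mul_left]
    refine ENNReal.tsum_le_tsum fun ℓ => ?_
    have hdb : d ℓ ≤ 2 * S ^ (1/2:ℝ) * (((2:ℝ≥0∞)⁻¹) ^ ℓ) ^ (1/2:ℝ) * u ℓ := by
      refine (h_d ℓ).trans ?_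
      refine mul_le_mul' ?_ le_rfl
      calc (ρ ℓ) ^ (1/2:ℝ) ≤ (4 * S * ((2:ℝ≥0∞)⁻¹) ^ ℓ) ^ (1/2:ℝ) :=
            ENNReal.rpow_le_rpow (h_rho ℓ) (by norm_num)
        _ = 2 * S ^ (1/2:ℝ) * (((2:ℝ≥0∞)⁻¹) ^ ℓ) ^ (1/2:ℝ) := by
            rw [ENNReal.mul_rpow_of_nonneg _ _ (by norm_num : (0:ℝ) ≤ 1/2),
              ENNReal.mul_rpow_of_nonneg _ _ (by norm_num : (0:ℝ) ≤ 1/2)]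
            have h4 : (4:ℝ≥0∞) ^ (1/2:ℝ) = 2 := by
              rw [show (4:ℝ≥0∞) = 2 ^ (2:ℕ) by norm_num,
                ← ENNReal.rpow_natCast 2 2, ← ENNReal.rpow_mul]
              norm_num
            rw [h4]
    calc (((2:ℝ≥0∞)⁻¹) ^ m) ^ (1/2:ℝ) * ((2:ℝ≥0∞) ^ (min m ℓ + 1) * d ℓ)
        ≤ (((2:ℝ≥0∞)⁻¹) ^ m) ^ (1/2:ℝ) * ((2:ℝ≥0∞) ^ (min m ℓ + 1)
            * (2 * S ^ (1/2:ℝ) * (((2:ℝ≥0∞)⁻¹) ^ ℓ) ^ (1/2:ℝ) * u ℓ)) :=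
          mul_le_mul' le_rfl (mul_le_mul' le_rfl hdb)
      _ = (2 * S ^ (1/2:ℝ)) * ((((2:ℝ≥0∞)⁻¹) ^ m) ^ (1/2:ℝ) * (2:ℝ≥0∞) ^ (min m ℓ + 1)
            * (((2:ℝ≥0∞)⁻¹) ^ ℓ) ^ (1/2:ℝ)) * u ℓ := by ring
      _ = (2 * S ^ (1/2:ℝ)) * (2 * rdec ^ (Nat.dist m ℓ)) * u ℓ := by rw [coeff_id]
      _ = 4 * S ^ (1/2:ℝ) * (rdec ^ (Nat.dist m ℓ) * u ℓ) := by ring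
  -- (8)
  have h_B : ∑' m, (t m) ^ 2 * ρ m ≤ 64 * S ^ 2 * ∑' m, (P m) ^ 2 := by
    rw [← ENNReal.tsum_mul_left]
    refine ENNReal.tsum_le_tsum fun m => ?_
    calc (t m) ^ 2 * ρ m ≤ (t m) ^ 2 * (4 * S * ((2:ℝ≥0∞)⁻¹) ^ m) :=
          mul_le_mul' le_rfl (h_rho m)
      _ = 4 * S * (((((2:ℝ≥0∞)⁻¹) ^ m) ^ (1/2:ℝ)) ^ 2 * (t m) ^ 2) := by
          rw [rpow_half_sq]
          ring
      _ = 4 * S * ((((2:ℝ≥0∞)⁻¹) ^ m) ^ (1/2:ℝ) * t m) ^ 2 := by rw [mul_pow]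
      _ ≤ 4 * S * (4 * S ^ (1/2:ℝ) * P m) ^ 2 :=
          mul_le_mul' le_rfl (pow_le_pow_left' (h_t m) 2)
      _ = 64 * S ^ 2 * (P m) ^ 2 := by
          rw [mul_pow, mul_pow, rpow_half_sq]
          ring
  -- (9)
  have h_P : ∑' m, (P m) ^ 2 ≤ 64 * ∑' ℓ, q ℓ := by
    have hu2 : ∀ ℓ, (u ℓ) ^ 2 = q ℓ := by
      intro ℓ
      rw [hu]
      exact rpow_half_sq _
    have hcs : ∀ m, (P m) ^ 2 ≤ 8 * ∑' ℓ, rdec ^ (Nat.dist m ℓ) * (u ℓ) ^ 2 := by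
      intro m
      rw [hP]
      refine (weighted_cs (fun ℓ => rdec ^ (Nat.dist m ℓ)) u).trans ?_
      exact mul_le_mul' (row_sum m) le_rfl
    calc ∑' m, (P m) ^ 2 ≤ ∑' m, 8 * ∑' ℓ, rdec ^ (Nat.dist m ℓ) * (u ℓ) ^ 2 :=
          ENNReal.tsum_le_tsum hcs
      _ = 8 * ∑' m, ∑' ℓ, rdec ^ (Nat.dist m ℓ) * (u ℓ) ^ 2 := ENNReal.tsum_mul_left
      _ = 8 * ∑' ℓ, ∑' m, rdec ^ (Nat.dist m ℓ) * (u ℓ) ^ 2 := by rw [ENNReal.tsum_comm]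
      _ = 8 * ∑' ℓ, (∑' m, rdec ^ (Nat.dist m ℓ)) * (u ℓ) ^ 2 := by
          refine congrArg _ (tsum_congr fun ℓ => ?_)
          rw [ENNReal.tsum_mul_right]
      _ ≤ 8 * ∑' ℓ, (8:ℝ≥0∞) * (u ℓ) ^ 2 := by
          refine mul_le_mul' le_rfl (ENNReal.tsum_le_tsum fun ℓ => ?_)
          refine mul_le_mul' ?_ le_rfl
          calc ∑' m, rdec ^ (Nat.dist m ℓ) = ∑' m, rdec ^ (Nat.dist ℓ m) :=
                tsum_congr fun m => by rw [Nat.dist_comm]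
            _ ≤ 8 := row_sum ℓ
      _ = 64 * ∑' ℓ, q ℓ := by
          rw [ENNReal.tsum_mul_left, ← mul_assoc]
          norm_num
          exact congrArg _ (tsum_congr fun ℓ => hu2 ℓ)
  -- wrap up
  have h_total : (∫⁻ x, (∫⁻ y, ENNReal.ofReal ((1 + min |x| |y|) * |f y|) ∂μ) ^ (2:ℕ) ∂μ)
      ≤ (64 * S) ^ 2 * N2 := by
    calc (∫⁻ x, (∫⁻ y, ENNReal.ofReal ((1 + min |x| |y|) * |f y|) ∂μ) ^ (2:ℕ) ∂μ)
        ≤ ∑' m, (t m) ^ 2 * ρ m := h_A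
      _ ≤ 64 * S ^ 2 * ∑' m, (P m) ^ 2 := h_B
      _ ≤ 64 * S ^ 2 * (64 * ∑' ℓ, q ℓ) := mul_le_mul' le_rfl h_P
      _ ≤ 64 * S ^ 2 * (64 * N2) := mul_le_mul' le_rfl (mul_le_mul' le_rfl h_q)
      _ = (64 * S) ^ 2 * N2 := by ring
  calc (∫⁻ x, (∫⁻ y, ENNReal.ofReal ((1 + min |x| |y|) * |f y|) ∂μ) ^ (2:ℕ) ∂μ) ^ (1/2:ℝ)
      ≤ ((64 * S) ^ 2 * N2) ^ (1/2:ℝ) := ENNReal.rpow_le_rpow h_total (by norm_num)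
    _ = 64 * S * N2 ^ (1/2:ℝ) := by
        rw [ENNReal.mul_rpow_of_nonneg _ _ (by norm_num : (0:ℝ) ≤ 1/2), sq_rpow_half]
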